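/- (Sufficient condition for non-convexity of ∂F_c, homogeneous real case.) Assume m ≥ 3, n ≥ 2, b k = 0 for all k, and let c : Fin m → ℝ be such that (c·A).PosSemidef and the kernel of c·A is exactly two-dimensional: there are linearly independent x₀, x₁ with (c·A).mulVec x₀ = 0, (c·A).mulVec x₁ = 0, and every x with (c·A).mulVec x = 0 is a linear combination of x₀ and x₁. Define u k := x₀ ⬝ᵥ (A k).mulVec x₀, v k := x₁ ⬝ᵥ (A k).mulVec x₁, w k := x₀ ⬝ᵥ (A k).mulVec x₁, and assume u, v, w are linearly independent over ℝ. Then ∂F_c = f '' {x | (c·A).mulVec x = 0}, and this set is not convex. -/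

import Mathlib

open Matrix

theorem boundary_nonconvexity_sufficient_condition_homogeneous (n m : ℕ)
    (hm : 3 ≤ m) (hn : 2 ≤ n)
    (A : Fin m → Matrix (Fin n) (Fin n) ℝ) (hA : ∀ k, (A k)ᵀ = A k)
    (f : (Fin n → ℝ) → (Fin m → ℝ))
    (hf : ∀ x k, f x k = x ⬝ᵥ (A k).mulVec x)
    (c : Fin m → ℝ)
    (hpsd : (∑ k, c k • A k).PosSemidef)
    (x₀ x₁ : Fin n → ℝ) (hindep01 : LinearIndependent ℝ ![x₀, x₁])
    (hker0 : (∑ k, c k • A k).mulVec x₀ = 0)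
    (hker1 : (∑ k, c k • A k).mulVec x₁ = 0)
    (hker2 : ∀ x : Fin n → ℝ, (∑ k, c k • A k).mulVec x = 0 →
      ∃ t₀ t₁ : ℝ, x = t₀ • x₀ + t₁ • x₁)
    (u v w : Fin m → ℝ)
    (hu : ∀ k, u k = x₀ ⬝ᵥ (A k).mulVec x₀)
    (hv : ∀ k, v k = x₁ ⬝ᵥ (A k).mulVec x₁)
    (hw : ∀ k, w k = x₀ ⬝ᵥ (A k).mulVec x₁)
    (hindep : LinearIndependent ℝ ![u, v, w]) :
    {y ∈ Set.range f | ∀ y' ∈ Set.range f, c ⬝ᵥ y ≤ c ⬝ᵥ y'} =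
      f '' {x : Fin n → ℝ | (∑ k, c k • A k).mulVec x = 0} ∧
    ¬ Convex ℝ (f '' {x : Fin n → ℝ | (∑ k, c k • A k).mulVec x = 0}) := by
  set M := ∑ k, c k • A k with hM
  -- key identity: c ⬝ᵥ f x = x ⬝ᵥ M *ᵥ x
  have key : ∀ x : Fin n → ℝ, c ⬝ᵥ f x = x ⬝ᵥ M *ᵥ x := by
    intro x
    have h : M *ᵥ x = ∑ k, c k • ((A k) *ᵥ x) := by
      funext i
      simp only [hM, mulVec, dotProduct, Finset.sum_apply, Matrix.sum_apply, Matrix.smul_apply,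
        Pi.smul_apply, smul_eq_mul, Finset.sum_mul, Finset.mul_sum, mul_assoc]
      rw [Finset.sum_comm]
    rw [h]
    simp only [dotProduct, hf, Finset.sum_apply, Pi.smul_apply, smul_eq_mul, Finset.mul_sum]
    rw [Finset.sum_comm]
    exact Finset.sum_congr rfl fun k _ => Finset.sum_congr rfl fun i _ => by ring
  have hnonneg : ∀ x : Fin n → ℝ, 0 ≤ x ⬝ᵥ M *ᵥ x := fun x => by simpa using hpsd.dotProduct_mulVec_nonneg x
  have hzero_iff : ∀ x : Fin n → ℝ, x ⬝ᵥ M *ᵥ x = 0 ↔ M *ᵥ x = 0 := fun x =>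
    hpsd.dotProduct_mulVec_zero_iff x
  -- symmetry of each A k in dot products
  have hsymm : ∀ k (a b : Fin n → ℝ), a ⬝ᵥ (A k) *ᵥ b = b ⬝ᵥ (A k) *ᵥ a := by
    intro k a b
    rw [dotProduct_mulVec, ← hA k, vecMul_transpose, dotProduct_comm, hA k]
  -- bilinear expansion of f on ker M
  have hexp : ∀ t₀ t₁ : ℝ, f (t₀ • x₀ + t₁ • x₁) =
      (t₀ ^ 2) • u + (t₁ ^ 2) • v + (2 * t₀ * t₁) • w := by
    intro t₀ t₁
    funext k
    simp only [hf, Pi.add_apply, Pi.smul_apply, smul_eq_mul, hu, hv, hw,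
      mulVec_add, mulVec_smul, dotProduct_add, add_dotProduct, dotProduct_smul,
      smul_dotProduct, smul_eq_mul]
    rw [hsymm k x₁ x₀]
    ring
  constructor
  · ext y
    simp only [Set.mem_setOf_eq, Set.mem_image, Set.mem_range]
    constructor
    · rintro ⟨⟨x, rfl⟩, hmin⟩
      refine ⟨x, ?_, rfl⟩
      have h0 : c ⬝ᵥ f x ≤ c ⬝ᵥ f 0 := hmin (f 0) ⟨0, rfl⟩
      have hf0 : c ⬝ᵥ f 0 = 0 := by simp [key]
      have : x ⬝ᵥ M *ᵥ x = 0 :=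
        le_antisymm (by rw [← key]; linarith) (hnonneg x)
      exact (hzero_iff x).mp this
    · rintro ⟨x, hx, rfl⟩
      refine ⟨⟨x, rfl⟩, ?_⟩
      rintro y' ⟨x', rfl⟩
      have h1 : c ⬝ᵥ f x = 0 := by rw [key, (hzero_iff x).mpr hx]
      rw [h1, key]
      exact hnonneg x'
  · intro hconv
    have hu_mem : u ∈ f '' {x : Fin n → ℝ | M *ᵥ x = 0} := by
      refine ⟨x₀, hker0, ?_⟩
      funext k; rw [hf, hu]
    have hv_mem : v ∈ f '' {x : Fin n → ℝ | M *ᵥ x = 0} := by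
      refine ⟨x₁, hker1, ?_⟩
      funext k; rw [hf, hv]
    have hmid := hconv hu_mem hv_mem (by norm_num : (0:ℝ) ≤ 1/2) (by norm_num : (0:ℝ) ≤ 1/2)
      (by norm_num)
    obtain ⟨x, hx, hxeq⟩ := hmid
    obtain ⟨t₀, t₁, rfl⟩ := hker2 x hx
    rw [hexp t₀ t₁] at hxeq
    -- linear independence gives contradiction
    have hli := Fintype.linearIndependent_iff.mp hindep
    have hcomb : ∑ i : Fin 3, ![t₀ ^ 2 - 1/2, t₁ ^ 2 - 1/2, 2 * t₀ * t₁] i • ![u, v, w] i = 0 := by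
      simp only [Fin.sum_univ_three, Matrix.cons_val_zero, Matrix.cons_val_one, Matrix.head_cons,
        Matrix.cons_val_two, Matrix.tail_cons]
      have : (t₀ ^ 2) • u + (t₁ ^ 2) • v + (2 * t₀ * t₁) • w = (1/2 : ℝ) • u + (1/2 : ℝ) • v :=
        hxeq
      funext k
      have hk := congrFun this k
      simp only [Pi.add_apply, Pi.smul_apply, smul_eq_mul] at hk ⊢
      simp only [Pi.zero_apply]
      ring_nf
      ring_nf at hk
      linarith
    have h0 := hli _ hcomb 0
    have h2 := hli _ hcomb 2
    simp only [Matrix.cons_val_zero, Matrix.cons_val_two, Matrix.tail_cons, Matrix.head_cons] at h0 h2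
    have ht₀ : t₀ ^ 2 = 1/2 := by linarith
    have ht : t₀ * t₁ = 0 := by linarith
    have h1 := hli _ hcomb 1
    simp only [Matrix.cons_val_one, Matrix.head_cons, Matrix.cons_val_zero] at h1
    have ht₁ : t₁ ^ 2 = 1/2 := by linarith
    rcases mul_eq_zero.mp ht with h | h
    · rw [h] at ht₀; norm_num at ht₀
    · rw [h] at ht₁; norm_num at ht₁
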